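/- Let Σ be a finite alphabet and X ⊆ Σ^ℤ a minimal subshift. Then for every word a ∈ L(X) and every k ∈ ℕ there exists a word b ∈ Σ^* such that the concatenation ba belongs to L(X), and there is a unique word c ∈ Σ^k such that every occurrence of ba in a point of X is immediately followed by c; that is, for every x ∈ X and index i, if x|_{[i; i+ℓ(ba)−1]} = ba then x|_{[i+ℓ(ba); i+ℓ(ba)+k−1]} = c. -/

import Mathlib

/-- The two-sided shift map on `ℤ → A`. -/
def shiftMap {A : Type*} (x : ℤ → A) : ℤ → A := fun i => x (i + 1)

/-- The finite word `w` appears in `x : ℤ → A` at index `i`. -/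
def AppearsAt {A : Type*} (w : List A) (x : ℤ → A) (i : ℤ) : Prop :=
  ∀ (j : ℕ) (hj : j < w.length), x (i + j) = w.get ⟨j, hj⟩

/-- The language of a subshift: finite words appearing in some point of `X`. -/
def InLang {A : Type*} (X : Set (ℤ → A)) (w : List A) : Prop :=
  ∃ x ∈ X, ∃ i : ℤ, AppearsAt w x i

set_option linter.unusedSectionVars false
set_option linter.unusedVariables false
set_option linter.unusedTactic false
set_option maxHeartbeats 1000000

namespace Aux

/-- integer shift by j -/
def zshift {A : Type*} (j : ℤ) (x : ℤ → A) : ℤ → A := fun t => x (t + j)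

variable {A : Type*}

lemma appearsAt_nil (x : ℤ → A) (i : ℤ) : AppearsAt [] x i := by
  intro j hj; simp at hj

lemma appearsAt_append {u v : List A} {x : ℤ → A} {i : ℤ} :
    AppearsAt (u ++ v) x i ↔ AppearsAt u x i ∧ AppearsAt v x (i + u.length) := by
  constructor
  · intro h
    constructor
    · intro j hj
      have hj' : j < (u ++ v).length := by simp; omega
      have := h j hj'
      have hg : (u ++ v).get ⟨j, hj'⟩ = u.get ⟨j, hj⟩ := by
        simp [List.getElem_append, hj]
      rwa [hg] at this
    · intro j hj
      have hj' : u.length + j < (u ++ v).length := by simp; omega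
      have := h (u.length + j) hj'
      have hg : (u ++ v).get ⟨u.length + j, hj'⟩ = v.get ⟨j, hj⟩ := by
        simp [List.getElem_append_right]
      rw [hg] at this
      rw [show i + u.length + (j:ℤ) = i + (↑(u.length + j) : ℤ) by push_cast; ring]
      exact this
  · rintro ⟨h1, h2⟩ j hj
    rcases lt_or_ge j u.length with hl | hl
    · have hg : (u ++ v).get ⟨j, hj⟩ = u.get ⟨j, hl⟩ := by
        simp [List.getElem_append, hl]
      rw [hg]; exact h1 j hl
    · have hj2 : j - u.length < v.length := by simp at hj; omega
      have := h2 (j - u.length) hj2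
      have hj'' : u.length + (j - u.length) < (u ++ v).length := by simp; omega
      have hg : (u ++ v).get ⟨j, hj⟩ = v.get ⟨j - u.length, hj2⟩ := by
        have : j = u.length + (j - u.length) := by omega
        simp [List.getElem_append_right, hl]
      rw [hg]
      rw [show i + (j:ℤ) = i + u.length + (↑(j - u.length) : ℤ) by push_cast [hl]; ring]
      exact this

lemma appearsAt_zshift {w : List A} {x : ℤ → A} {i j : ℤ} :
    AppearsAt w (zshift j x) i ↔ AppearsAt w x (i + j) := by
  unfold zshift AppearsAt
  constructor <;> intro h t ht <;> have := h t ht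
  · simp only [] at this
    rwa [show i + (t:ℤ) + j = i + j + t by ring] at this
  · show x (i + (t:ℤ) + j) = _
    rwa [show i + (t:ℤ) + j = i + j + t by ring]

lemma appearsAt_singleton {c : A} {x : ℤ → A} {i : ℤ} :
    AppearsAt [c] x i ↔ x i = c := by
  unfold AppearsAt
  constructor
  · intro h; have := h 0 (by simp); simpa using this
  · intro h j hj
    simp only [List.length_singleton] at hj
    have : j = 0 := by omega
    subst this
    simpa using h

lemma appearsAt_eq_of_appearsAt {w : List A} {x y : ℤ → A} {i i' : ℤ}
    (hx : AppearsAt w x i) (hagree : ∀ t : ℕ, t < w.length → y (i' + t) = x (i + t)) :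
    AppearsAt w y i' := by
  intro j hj
  rw [hagree j hj]; exact hx j hj

end Aux

namespace Aux2
open Aux

variable {A : Type*} [TopologicalSpace A] [DiscreteTopology A]

lemma continuous_zshift (j : ℤ) : Continuous (zshift (A := A) j) :=
  continuous_pi fun i => continuous_apply (i + j)

/-- zshift as a homeomorphism -/
def zshiftHomeo (j : ℤ) : (ℤ → A) ≃ₜ (ℤ → A) where
  toFun := zshift j
  invFun := zshift (-j)
  left_inv := by intro x; funext t; simp [zshift]
  right_inv := by intro x; funext t; simp [zshift]
  continuous_toFun := continuous_zshift j
  continuous_invFun := continuous_zshift (-j)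

lemma shiftMap_eq_zshift : (shiftMap : (ℤ → A) → (ℤ → A)) = zshift 1 := rfl

lemma zshift_mem {X : Set (ℤ → A)} (hinv : shiftMap '' X = X)
    {x : ℤ → A} (hx : x ∈ X) (j : ℤ) : zshift j x ∈ X := by
  induction j using Int.induction_on with
  | zero =>
      have : zshift (0:ℤ) x = x := by funext t; simp [zshift]
      rwa [this]
  | succ n ih =>
      have : zshift (n + 1) x = shiftMap (zshift n x) := by
        funext t; simp [zshift, shiftMap]; ring_nf
      rw [this, ← hinv]
      exact Set.mem_image_of_mem _ ih
  | pred n ih =>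
      have hmem : zshift (-n) x ∈ shiftMap '' X := by rw [hinv]; exact ih
      obtain ⟨w, hw, hweq⟩ := hmem
      have : zshift (-(n:ℤ) - 1) x = w := by
        funext t
        have := congrFun hweq (t - 1)
        simp [shiftMap, zshift] at this ⊢
        rw [show t + (-(n:ℤ) - 1) = t - 1 + -(n:ℤ) by ring, ← this]
      rw [this]; exact hw

lemma isClosed_mem_at (i : ℤ) (s : Set A) : IsClosed {z : ℤ → A | z i ∈ s} := by
  have : {z : ℤ → A | z i ∈ s} = (fun z : ℤ → A => z i) ⁻¹' s := rfl
  rw [this]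
  exact (isClosed_discrete s).preimage (continuous_apply i)

lemma isClosed_eq_at (i : ℤ) (v : A) : IsClosed {z : ℤ → A | z i = v} :=
  isClosed_mem_at i {v}

end Aux2

namespace Core
open Aux Aux2

variable {A : Type*} [Fintype A] [TopologicalSpace A] [DiscreteTopology A]

/-- continuation set of the (infinite) past of `x` within `X` -/
def Cset (X : Set (ℤ → A)) (x : ℤ → A) : Set A :=
  {α | ∃ z ∈ X, (∀ i : ℤ, i < 0 → z i = x i) ∧ z 0 = α}

lemma self_mem_Cset {X : Set (ℤ → A)} {x : ℤ → A} (hx : x ∈ X) : x 0 ∈ Cset X x :=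
  ⟨x, hx, fun _ _ => rfl, rfl⟩

lemma core (X : Set (ℤ → A)) (hne : X.Nonempty) (hcl : IsClosed X)
    (hinv : shiftMap '' X = X)
    (hmin : ∀ Y : Set (ℤ → A), Y ⊆ X → Y.Nonempty → IsClosed Y →
      shiftMap '' Y = Y → Y = X)
    (a : List A) (ha : InLang X a) :
    ∃ b : List A, InLang X (b ++ a) ∧
      ∃ c : A, ∀ x ∈ X, ∀ i : ℤ,
        AppearsAt (b ++ a) x i → x (i + (b ++ a).length) = c := by
  classical
  haveI : CompactSpace A := Finite.compactSpace
  -- the set of points with `a` ending at position 0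
  set P : Set (ℤ → A) := {x | x ∈ X ∧ AppearsAt a x (-(a.length : ℤ))} with hP
  have hPne : P.Nonempty := by
    obtain ⟨x₀, hx₀, i₀, happ⟩ := ha
    refine ⟨zshift (i₀ + a.length) x₀, zshift_mem hinv hx₀ _, ?_⟩
    rw [appearsAt_zshift, show -(a.length:ℤ) + (i₀ + a.length) = i₀ by ring]
    exact happ
  -- minimize the number of possible continuations
  set K : Set ℕ := {n | ∃ x ∈ P, (Cset X x).ncard = n} with hK
  have hKne : K.Nonempty := ⟨_, hPne.choose, hPne.choose_spec, rfl⟩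
  obtain ⟨xb, hxbP, hxbcard⟩ := Nat.sInf_mem hKne
  have hxbX : xb ∈ X := hxbP.1
  set m : ℕ := sInf K with hm
  set S : Set A := Cset X xb with hS
  have hSfin : S.Finite := Set.toFinite _
  have hSne : S.Nonempty := ⟨xb 0, self_mem_Cset hxbX⟩
  have hmle : ∀ x ∈ P, m ≤ (Cset X x).ncard := fun x hx => Nat.sInf_le ⟨x, hx, rfl⟩
  -- stability: a finite window of the past of xb forces continuations into S
  have hstab : ∃ N : ℕ, a.length ≤ N ∧ ∀ z ∈ X,
      (∀ i : ℤ, -(N:ℤ) ≤ i → i < 0 → z i = xb i) → z 0 ∈ S := by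
    by_contra hcon
    push_neg at hcon
    set W : ℕ → Set (ℤ → A) := fun M =>
      {z | z ∈ X ∧ (∀ i : ℤ, -((M + a.length : ℕ):ℤ) ≤ i → i < 0 → z i = xb i) ∧ z 0 ∉ S}
      with hW
    have hWne : ∀ M, (W M).Nonempty := by
      intro M
      obtain ⟨z, hzX, hzwin, hz0⟩ := hcon (M + a.length) (by omega)
      exact ⟨z, hzX, hzwin, hz0⟩
    have hWdec : ∀ M, W (M+1) ⊆ W M := by
      intro M z hz
      refine ⟨hz.1, fun i h1 h2 => hz.2.1 i (by push_cast at h1 ⊢; omega) h2, hz.2.2⟩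
    have hWcl : ∀ M, IsClosed (W M) := by
      intro M
      have : W M = X ∩ ((⋂ (i : ℤ), ⋂ (_ : -((M + a.length : ℕ):ℤ) ≤ i), ⋂ (_ : i < 0),
          {z : ℤ → A | z i = xb i}) ∩ {z : ℤ → A | z 0 ∈ Sᶜ}) := by
        ext z
        simp only [hW, Set.mem_inter_iff, Set.mem_iInter, Set.mem_setOf_eq, Set.mem_compl_iff]
      rw [this]
      exact hcl.inter ((isClosed_iInter fun i => isClosed_iInter fun _ =>
        isClosed_iInter fun _ => isClosed_eq_at i (xb i)).inter (isClosed_mem_at 0 Sᶜ))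
    obtain ⟨z, hz⟩ := IsCompact.nonempty_iInter_of_sequence_nonempty_isCompact_isClosed
      W hWdec hWne ((hWcl 0).isCompact) hWcl
    have hzW : ∀ M, z ∈ W M := by simpa [Set.mem_iInter] using hz
    have hzX : z ∈ X := (hzW 0).1
    have hzagr : ∀ i : ℤ, i < 0 → z i = xb i := by
      intro i hi
      exact (hzW (i.natAbs)).2.1 i (by omega) hi
    exact (hzW 0).2.2 ⟨z, hzX, hzagr, rfl⟩
  obtain ⟨N, hN, hstab⟩ := hstab
  -- exactness: any point with that window has continuation set exactly S
  have hexact : ∀ z ∈ X, (∀ i : ℤ, -(N:ℤ) ≤ i → i < 0 → z i = xb i) → Cset X z = S := by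
    intro z hzX hzwin
    have hsub : Cset X z ⊆ S := by
      rintro α ⟨z', hz'X, hz'agr, hz'0⟩
      refine hz'0 ▸ hstab z' hz'X fun i h1 h2 => ?_
      rw [hz'agr i h2]; exact hzwin i h1 h2
    have hzP : z ∈ P := by
      refine ⟨hzX, fun j hj => ?_⟩
      have h1 : (-(a.length:ℤ) + j) < 0 := by omega
      have h2 : -(N:ℤ) ≤ -(a.length:ℤ) + j := by omega
      rw [hzwin _ h2 h1]
      exact hxbP.2 j hj
    exact Set.eq_of_subset_of_ncard_le hsub (by rw [hxbcard]; exact hmle z hzP) (Set.toFinite _)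
  -- the word b
  set b : List A := List.ofFn (fun t : Fin (N - a.length) => xb (-(N:ℤ) + t)) with hb
  have hblen : b.length = N - a.length := by simp [hb]
  have hlen : (b ++ a).length = N := by simp [hblen]; omega
  have hxbapp : AppearsAt (b ++ a) xb (-(N:ℤ)) := by
    rw [appearsAt_append]
    constructor
    · intro j hj
      show xb (-(N:ℤ) + j) =
        (List.ofFn fun t : Fin (N - a.length) => xb (-(N:ℤ) + (t:ℕ))).get ⟨j, by simpa using lt_of_lt_of_eq hj hblen⟩
      rw [List.get_ofFn]
      simp
    · rw [hblen]
      have : -(N:ℤ) + ((N - a.length : ℕ):ℤ) = -(a.length:ℤ) := by push_cast [hN]; ring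
      rw [this]
      exact hxbP.2
  have hwin_iff : ∀ z : ℤ → A, AppearsAt (b ++ a) z (-(N:ℤ)) ↔
      (∀ i : ℤ, -(N:ℤ) ≤ i → i < 0 → z i = xb i) := by
    intro z
    constructor
    · intro happ i h1 h2
      set t : ℕ := (i + N).toNat with ht
      have hti : (t:ℤ) = i + N := by omega
      have htlt : t < (b ++ a).length := by rw [hlen]; omega
      have e1 := happ t htlt
      have e2 := hxbapp t htlt
      rw [show -(N:ℤ) + t = i by omega] at e1 e2
      rw [e1, ← e2]
    · intro hwin
      refine appearsAt_eq_of_appearsAt hxbapp fun t ht => ?_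
      rw [hlen] at ht
      exact hwin _ (by omega) (by omega)
  have hmpos : 1 ≤ m := by
    rw [← hxbcard]
    exact (Set.ncard_pos hSfin).mpr hSne
  rcases eq_or_lt_of_le hmpos with hm1 | hm2
  · -- unique continuation case
    obtain ⟨c₀, hc₀⟩ := Set.ncard_eq_one.mp (by rw [hxbcard]; omega : S.ncard = 1)
    refine ⟨b, ⟨xb, hxbX, -(N:ℤ), hxbapp⟩, c₀, fun x hx i happ => ?_⟩
    set z : ℤ → A := zshift (i + N) x with hz
    have hzX : z ∈ X := zshift_mem hinv hx _
    have hzapp : AppearsAt (b ++ a) z (-(N:ℤ)) := by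
      rw [hz, appearsAt_zshift, show -(N:ℤ) + (i + N) = i by ring]
      exact happ
    have hz0 : z 0 ∈ S := hstab z hzX ((hwin_iff z).mp hzapp)
    rw [hc₀, Set.mem_singleton_iff] at hz0
    have : z 0 = x (i + N) := by rw [hz]; show x (0 + (i + N)) = _; ring_nf
    rw [hlen, ← this, hz0]
  · -- at least two continuations: contradiction
    exfalso
    letI : LinearOrder A := LinearOrder.lift' (Fintype.equivFin A) (Fintype.equivFin A).injective
    obtain ⟨c₀, hc₀S, hc₀min⟩ := Set.exists_min_image S id hSfin hSne
    have hS2 : 1 < S.ncard := by omega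
    obtain ⟨c₁, hc₁S, hc₁ne⟩ := Set.exists_ne_of_one_lt_ncard hS2 c₀
    -- the set of points with the same past as xb
    set F : Set (ℤ → A) := {z | z ∈ X ∧ ∀ i : ℤ, i < 0 → z i = xb i} with hF
    have hFcl : IsClosed F := by
      have : F = X ∩ ⋂ (i : ℤ), ⋂ (_ : i < 0), {z : ℤ → A | z i = xb i} := by
        ext z
        simp only [hF, Set.mem_inter_iff, Set.mem_iInter, Set.mem_setOf_eq]
      rw [this]
      exact hcl.inter (isClosed_iInter fun i => isClosed_iInter fun _ => isClosed_eq_at i (xb i))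
    have hFne : xb ∈ F := ⟨hxbX, fun _ _ => rfl⟩
    -- greedy lexicographic minimization of the future
    set T : ℕ → Set (ℤ → A) :=
      fun M => Nat.rec F (fun M TM => {z | z ∈ TM ∧ ∀ z' ∈ TM, z (M:ℤ) ≤ z' (M:ℤ)}) M with hT
    have hTsucc : ∀ M, T (M+1) = {z | z ∈ T M ∧ ∀ z' ∈ T M, z (M:ℤ) ≤ z' (M:ℤ)} := fun M => rfl
    have hTprop : ∀ M, (T M).Nonempty ∧ IsClosed (T M) := by
      intro M
      induction M with
      | zero => exact ⟨⟨xb, hFne⟩, hFcl⟩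
      | succ M ih =>
        obtain ⟨⟨hne', hcl'⟩⟩ := And.intro ih trivial
        constructor
        · obtain ⟨v, ⟨z, hz, hzv⟩, hvmin⟩ :=
            Set.exists_min_image ((fun z : ℤ → A => z (M:ℤ)) '' T M) id (Set.toFinite _)
              (hne'.image _)
          refine ⟨z, ?_⟩
          rw [hTsucc]
          refine ⟨hz, fun z' hz' => ?_⟩
          have h1 : v ≤ z' (M:ℤ) := hvmin _ ⟨z', hz', rfl⟩
          have h2 : z (M:ℤ) = v := hzv
          exact le_trans (le_of_eq h2) h1
        · rw [hTsucc]
          have : {z | z ∈ T M ∧ ∀ z' ∈ T M, z (M:ℤ) ≤ z' (M:ℤ)} =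
              T M ∩ ⋂ (z' : ℤ → A), ⋂ (_ : z' ∈ T M), {z : ℤ → A | z (M:ℤ) ∈ {α | α ≤ z' (M:ℤ)}} := by
            ext z
            simp only [Set.mem_inter_iff, Set.mem_iInter, Set.mem_setOf_eq]
          rw [this]
          exact hcl'.inter (isClosed_iInter fun z' => isClosed_iInter fun _ =>
            isClosed_mem_at _ _)
    have hTdec : ∀ M, T (M+1) ⊆ T M := by
      intro M z hz
      rw [hTsucc] at hz
      exact hz.1
    obtain ⟨xs, hxs⟩ := IsCompact.nonempty_iInter_of_sequence_nonempty_isCompact_isClosed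
      T hTdec (fun M => (hTprop M).1) ((hTprop 0).2.isCompact) (fun M => (hTprop M).2)
    have hxsT : ∀ M, xs ∈ T M := by simpa [Set.mem_iInter] using hxs
    have hxsF : xs ∈ F := hxsT 0
    have hxsX : xs ∈ X := hxsF.1
    -- membership in T M for points agreeing with xs up to M
    have hTmem : ∀ M : ℕ, ∀ z, z ∈ F → (∀ t : ℕ, t < M → z (t:ℤ) = xs (t:ℤ)) → z ∈ T M := by
      intro M
      induction M with
      | zero => exact fun z hz _ => hz
      | succ M ih =>
        intro z hzF hzagr
        rw [hTsucc]
        refine ⟨ih z hzF (fun t ht => hzagr t (by omega)), fun z' hz' => ?_⟩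
        rw [hzagr M (by omega)]
        exact ((hTsucc M) ▸ hxsT (M+1)).2 z' hz'
    have hminTail : ∀ M : ℕ, ∀ z, z ∈ F → (∀ t : ℕ, t < M → z (t:ℤ) = xs (t:ℤ)) →
        xs (M:ℤ) ≤ z (M:ℤ) := by
      intro M z hzF hzagr
      exact ((hTsucc M) ▸ hxsT (M+1)).2 z (hTmem M z hzF hzagr)
    -- key lemma: every occurrence of b ++ a in the future of xs is followed by c₀
    have hkey : ∀ j : ℤ, 0 ≤ j → AppearsAt (b ++ a) xs (j - N) → xs j = c₀ := by
      intro j hj happ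
      set w : ℤ → A := zshift j xs with hw
      have hwX : w ∈ X := zshift_mem hinv hxsX j
      have hwapp : AppearsAt (b ++ a) w (-(N:ℤ)) := by
        rw [hw, appearsAt_zshift, show -(N:ℤ) + j = j - N by ring]
        exact happ
      have hwwin := (hwin_iff w).mp hwapp
      have hCw : Cset X w = S := hexact w hwX hwwin
      have hc₀Cw : c₀ ∈ Cset X w := by rw [hCw]; exact hc₀S
      obtain ⟨z, hzX, hzagr, hz0⟩ := hc₀Cw
      set y : ℤ → A := zshift (-j) z with hy
      have hyX : y ∈ X := zshift_mem hinv hzX _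
      have hyagr : ∀ i : ℤ, i < j → y i = xs i := by
        intro i hi
        have h1 : y i = z (i - j) := by rw [hy]; show z (i + -j) = _; ring_nf
        have h2 : z (i - j) = w (i - j) := hzagr _ (by omega)
        have h3 : w (i - j) = xs i := by rw [hw]; show xs (i - j + j) = _; ring_nf
        rw [h1, h2, h3]
      have hyj : y j = c₀ := by
        have : y j = z 0 := by rw [hy]; show z (j + -j) = _; ring_nf
        rw [this, hz0]
      have hyF : y ∈ F := by
        refine ⟨hyX, fun i hi => ?_⟩
        rw [hyagr i (by omega)]
        exact hxsF.2 i hi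
      set M : ℕ := j.toNat with hM
      have hMj : (M:ℤ) = j := Int.toNat_of_nonneg hj
      have hle : xs (M:ℤ) ≤ y (M:ℤ) :=
        hminTail M y hyF (fun t ht => (hyagr (t:ℤ) (by omega)).symm ▸ rfl)
      rw [hMj] at hle
      rw [hyj] at hle
      have hxsjS : xs j ∈ S := by
        have : w 0 ∈ S := hstab w hwX hwwin
        have hw0 : w 0 = xs j := by rw [hw]; show xs (0 + j) = _; ring_nf
        rwa [hw0] at this
      exact le_antisymm hle (hc₀min _ hxsjS)
    -- the omega-limit set of xs
    set G : ℕ → Set (ℤ → A) := fun M => {y | ∃ j : ℤ, (M:ℤ) ≤ j ∧ y = zshift j xs} with hG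
    set Om : ℕ → Set (ℤ → A) := fun M => closure (G M) with hOm
    have hGsubX : ∀ M, G M ⊆ X := by
      rintro M y ⟨j, hj, rfl⟩
      exact zshift_mem hinv hxsX j
    have hOmsubX : ∀ M, Om M ⊆ X := fun M => closure_minimal (hGsubX M) hcl
    have hGdec : ∀ M, G (M+1) ⊆ G M := by
      rintro M y ⟨j, hj, rfl⟩
      exact ⟨j, by push_cast at hj ⊢; omega, rfl⟩
    have hOmdec : ∀ M, Om (M+1) ⊆ Om M := fun M => closure_mono (hGdec M)
    have hOmne : ∀ M, (Om M).Nonempty :=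
      fun M => ⟨zshift M xs, subset_closure ⟨M, le_refl _, rfl⟩⟩
    set Y : Set (ℤ → A) := ⋂ M, Om M with hY
    have hYne : Y.Nonempty := IsCompact.nonempty_iInter_of_sequence_nonempty_isCompact_isClosed
      Om hOmdec hOmne (isClosed_closure.isCompact) (fun M => isClosed_closure)
    have hYcl : IsClosed Y := isClosed_iInter fun M => isClosed_closure
    have hYsub : Y ⊆ X := fun y hy => hOmsubX 0 (Set.mem_iInter.mp hy 0)
    -- invariance of Y
    have hshift_zshift : ∀ (j : ℤ) (x : ℤ → A), shiftMap (zshift j x) = zshift (j+1) x := by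
      intro j x
      funext t
      show x (t + 1 + j) = x (t + (j + 1))
      ring_nf
    have himgG : ∀ M, shiftMap '' G M = G (M+1) := by
      intro M
      ext y
      constructor
      · rintro ⟨g, ⟨j, hj, rfl⟩, rfl⟩
        exact ⟨j + 1, by push_cast; omega, (hshift_zshift j xs).symm ▸ rfl⟩
      · rintro ⟨j, hj, rfl⟩
        refine ⟨zshift (j-1) xs, ⟨j - 1, by push_cast at hj ⊢; omega, rfl⟩, ?_⟩
        rw [hshift_zshift]
        ring_nf
    have hhomeo : (shiftMap : (ℤ → A) → (ℤ → A)) = ⇑(zshiftHomeo (A := A) 1) := rfl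
    have himgOm : ∀ M, shiftMap '' Om M = Om (M+1) := by
      intro M
      rw [hOm]
      show shiftMap '' closure (G M) = closure (G (M+1))
      rw [hhomeo, (zshiftHomeo (A := A) 1).image_closure, ← hhomeo, himgG]
    have hYinv : shiftMap '' Y = Y := by
      rw [hY]
      show shiftMap '' ⋂ M, Om M = ⋂ M, Om M
      rw [hhomeo, Set.image_iInter (zshiftHomeo (A := A) 1).bijective Om]
      apply le_antisymm
      · intro y hy
        rw [Set.mem_iInter] at hy ⊢
        intro M
        have := hy M
        rw [← hhomeo, himgOm] at this
        exact hOmdec M this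
      · intro y hy
        rw [Set.mem_iInter] at hy ⊢
        intro M
        rw [← hhomeo, himgOm]
        exact hy (M + 1)
    have hYX : Y = X := hmin Y hYsub hYne hYcl hYinv
    -- find a point with past xb and continuation c₁ inside Y
    obtain ⟨w₁, hw₁X, hw₁agr, hw₁0⟩ := (hS ▸ hc₁S : c₁ ∈ Cset X xb)
    have hw₁Y : w₁ ∈ Y := by rw [hYX]; exact hw₁X
    have hw₁Om : w₁ ∈ Om N := Set.mem_iInter.mp hw₁Y N
    -- approximate w₁ by a shift of xs on the window [-N, 0]
    set U : Set (ℤ → A) :=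
      ⋂ (t : Fin (N+1)), {v : ℤ → A | v (-(N:ℤ) + t) = w₁ (-(N:ℤ) + t)} with hU
    have hUopen : IsOpen U := isOpen_iInter_of_finite fun t => by
      have : {v : ℤ → A | v (-(N:ℤ) + t) = w₁ (-(N:ℤ) + t)} =
          (fun v : ℤ → A => v (-(N:ℤ) + t)) ⁻¹' {w₁ (-(N:ℤ) + t)} := rfl
      rw [this]
      exact (isOpen_discrete _).preimage (continuous_apply _)
    have hw₁U : w₁ ∈ U := Set.mem_iInter.mpr fun t => rfl
    obtain ⟨y, hyU, hyG⟩ := (mem_closure_iff.mp hw₁Om) U hUopen hw₁U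
    obtain ⟨j, hjN, rfl⟩ := hyG
    have hyU' : ∀ t : ℕ, t ≤ N → xs (-(N:ℤ) + t + j) = w₁ (-(N:ℤ) + t) := by
      intro t ht
      have := Set.mem_iInter.mp hyU ⟨t, by omega⟩
      exact this
    have hj0 : 0 ≤ j := by omega
    have happ : AppearsAt (b ++ a) xs (j - N) := by
      refine appearsAt_eq_of_appearsAt hxbapp fun t ht => ?_
      rw [hlen] at ht
      have e1 : xs (j - N + t) = w₁ (-(N:ℤ) + t) := by
        rw [show j - (N:ℤ) + t = -(N:ℤ) + t + j by ring]
        exact hyU' t (by omega)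
      have e2 : w₁ (-(N:ℤ) + t) = xb (-(N:ℤ) + t) := hw₁agr _ (by omega)
      rw [e1, e2]
    have hxsj : xs j = c₀ := hkey j hj0 happ
    have hxsj' : xs j = c₁ := by
      have := hyU' N (le_refl N)
      rw [show -(N:ℤ) + (N:ℕ) + j = j by push_cast; ring,
        show -(N:ℤ) + (N:ℕ) = (0:ℤ) by push_cast; ring] at this
      rw [this, hw₁0]
    exact hc₁ne (hxsj' ▸ hxsj)



lemma main (X : Set (ℤ → A)) (hne : X.Nonempty) (hcl : IsClosed X)
    (hinv : shiftMap '' X = X)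
    (hmin : ∀ Y : Set (ℤ → A), Y ⊆ X → Y.Nonempty → IsClosed Y →
      shiftMap '' Y = Y → Y = X)
    (k : ℕ) :
    ∀ (a : List A), InLang X a →
      ∃ b : List A, InLang X (b ++ a) ∧
        ∃ c : List A, c.length = k ∧ ∀ x ∈ X, ∀ i : ℤ,
          AppearsAt (b ++ a) x i → AppearsAt c x (i + (b ++ a).length) := by
  induction k with
  | zero =>
    intro a ha
    exact ⟨[], by simpa using ha, [], rfl, fun x hx i happ => appearsAt_nil x _⟩
  | succ k ih =>
    intro a ha
    obtain ⟨b, hbL, c, hclen, hcp⟩ := ih a ha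
    have hwL : InLang X ((b ++ a) ++ c) := by
      obtain ⟨x, hx, i, happ⟩ := hbL
      exact ⟨x, hx, i, appearsAt_append.mpr ⟨happ, hcp x hx i happ⟩⟩
    obtain ⟨b₂, hb₂L, α, hα⟩ := core X hne hcl hinv hmin ((b ++ a) ++ c) hwL
    refine ⟨b₂ ++ b, ?_, c ++ [α], by simp [hclen], ?_⟩
    · obtain ⟨x, hx, i, happ⟩ := hb₂L
      rw [show b₂ ++ ((b ++ a) ++ c) = (b₂ ++ (b ++ a)) ++ c by simp] at happ
      have := (appearsAt_append.mp happ).1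
      refine ⟨x, hx, i, ?_⟩
      rwa [show (b₂ ++ b) ++ a = b₂ ++ (b ++ a) by simp]
    · intro x hx i happ
      rw [show (b₂ ++ b) ++ a = b₂ ++ (b ++ a) by simp] at happ
      obtain ⟨h1, h2⟩ := appearsAt_append.mp happ
      have hc : AppearsAt c x (i + b₂.length + (b ++ a).length) := hcp x hx _ h2
      have hfull : AppearsAt (b₂ ++ ((b ++ a) ++ c)) x i := by
        refine appearsAt_append.mpr ⟨h1, appearsAt_append.mpr ⟨h2, ?_⟩⟩
        rwa [show i + (b₂.length:ℤ) + (b ++ a).length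
          = i + b₂.length + (b ++ a).length by push_cast; ring] at hc
      have hαx := hα x hx i hfull
      rw [appearsAt_append]
      constructor
      · refine appearsAt_eq_of_appearsAt hc fun t ht => ?_
        congr 1
        simp only [List.length_append]
        push_cast
        ring
      · rw [appearsAt_singleton]
        rw [← hαx]
        congr 1
        simp only [List.length_append]
        push_cast
        ring
end Core


/-- In a minimal subshift, for every word `a` of the language and every `k`
there is a word `b` with `b ++ a` in the language and a unique word `c` of length `k`
such that every occurrence of `b ++ a` in a point of `X` is immediately followed by `c`. -/
theorem minimal_subshift_unique_continuation
    {A : Type*} [Fintype A] [TopologicalSpace A] [DiscreteTopology A]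
    (X : Set (ℤ → A)) (hne : X.Nonempty) (hcl : IsClosed X)
    (hinv : shiftMap '' X = X)
    (hmin : ∀ Y : Set (ℤ → A), Y ⊆ X → Y.Nonempty → IsClosed Y →
      shiftMap '' Y = Y → Y = X)
    (a : List A) (ha : InLang X a) (k : ℕ) :
    ∃ b : List A, InLang X (b ++ a) ∧
      ∃! c : List A, c.length = k ∧ ∀ x ∈ X, ∀ i : ℤ,
        AppearsAt (b ++ a) x i → AppearsAt c x (i + (b ++ a).length) := by
  obtain ⟨b, hbL, c, hclen, hcp⟩ := Core.main X hne hcl hinv hmin k a ha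
  refine ⟨b, hbL, c, ⟨hclen, hcp⟩, ?_⟩
  rintro c' ⟨hc'len, hc'p⟩
  obtain ⟨x, hx, i, happ⟩ := hbL
  have A1 := hc'p x hx i happ
  have A2 := hcp x hx i happ
  apply List.ext_get (by omega)
  intro n h1 h2
  have e1 := A1 n (by omega)
  have e2 := A2 n (by omega)
  rw [← e1, ← e2]
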